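/- Let A and B be nonempty closed and convex subsets of a reflexive and strictly convex Banach space X with property (H), and let T : A∪B → A∪B be a cyclic contraction. Then for every b ∈ B, the sequence of iterates {T^{2n}(b)} converges in norm to b₀, the unique best proximity point of T in B (i.e., the unique b₀ ∈ B with ‖b₀ − Tb₀‖ = dist(A,B)). -/

import Mathlib

open Filter Metric Pointwise

/-- The distance between two sets: `inf {d(x,y) : x ∈ A, y ∈ B}`. -/
noncomputable def setDist {X : Type*} [PseudoMetricSpace X] (A B : Set X) : ℝ :=
  sInf (Set.image2 dist A B)

/-- `T` is a cyclic contraction on `A ∪ B`. -/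
def CyclicContraction {X : Type*} [PseudoMetricSpace X] (A B : Set X) (T : X → X) : Prop :=
  Set.MapsTo T A B ∧ Set.MapsTo T B A ∧ ∃ k : ℝ, 0 < k ∧ k < 1 ∧
    ∀ x ∈ A, ∀ y ∈ B, dist (T x) (T y) ≤ k * dist x y + (1 - k) * setDist A B

/-- The sequence `x` converges weakly to `z`. -/
def WeakTendsto {X : Type*} [NormedAddCommGroup X] [NormedSpace ℝ X]
    (x : ℕ → X) (z : X) : Prop :=
  ∀ f : X →L[ℝ] ℝ, Tendsto (fun n => f (x n)) atTop (nhds (f z))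

/-- `X` is reflexive: the canonical embedding into the double dual is surjective. -/
def ReflexiveSpace (X : Type*) [NormedAddCommGroup X] [NormedSpace ℝ X] : Prop :=
  Function.Surjective (NormedSpace.inclusionInDoubleDual ℝ X)

/-- Property (H): for sequences on the unit sphere, weak and norm convergence coincide. -/
def PropertyH (X : Type*) [NormedAddCommGroup X] [NormedSpace ℝ X] : Prop :=
  ∀ (x : ℕ → X) (z : X), (∀ n, ‖x n‖ = 1) →
    (WeakTendsto x z ↔ Tendsto x atTop (nhds z))

/-! ### Auxiliary lemmas -/

section Aux

variable {X : Type*} [NormedAddCommGroup X] [NormedSpace ℝ X]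

/-- The canonical map from `X` into its double dual equipped with the weak-star topology. -/
noncomputable def iotaW (x : X) : WeakDual ℝ (StrongDual ℝ X) :=
  StrongDual.toWeakDual (NormedSpace.inclusionInDoubleDual ℝ X x)

lemma iotaW_apply (x : X) (f : StrongDual ℝ X) : iotaW x f = f x := rfl

lemma toNormedDual_iotaW (x : X) :
    WeakDual.toStrongDual (iotaW x) = NormedSpace.inclusionInDoubleDual ℝ X x := rfl

lemma norm_iotaW (x : X) : ‖WeakDual.toStrongDual (iotaW x)‖ = ‖x‖ := by
  rw [toNormedDual_iotaW]
  exact (NormedSpace.inclusionInDoubleDualLi ℝ).norm_map x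

/-- Property (H) upgrades weak convergence of sequences to norm convergence. -/
lemma tendsto_of_weakTendsto (hH : PropertyH X) {v : ℕ → X} {e : X}
    (h : WeakTendsto v e) : Tendsto v atTop (nhds e) := by
  by_contra hcon
  rw [Metric.tendsto_atTop] at hcon
  push_neg at hcon
  obtain ⟨ε, hε, hfr⟩ := hcon
  obtain ⟨φ, hφ, hφP⟩ := extraction_of_frequently_atTop (frequently_atTop.2 hfr)
  have hne : ∀ j, ε ≤ ‖v (φ j) - e‖ := by
    intro j
    rw [← dist_eq_norm]
    exact hφP j
  have hpos : ∀ j, 0 < ‖v (φ j) - e‖ := fun j => lt_of_lt_of_le hε (hne j)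
  set u : ℕ → X := fun j => ‖v (φ j) - e‖⁻¹ • (v (φ j) - e) with hu
  have hnorm1 : ∀ j, ‖u j‖ = 1 := by
    intro j
    rw [hu]
    simp only [norm_smul, norm_inv, norm_norm]
    exact inv_mul_cancel₀ (ne_of_gt (hpos j))
  have hw : WeakTendsto u 0 := by
    intro f
    have h1 : Tendsto (fun j => f (v (φ j)) - f e) atTop (nhds 0) := by
      simpa using ((h f).comp hφ.tendsto_atTop).sub_const (f e)
    have hb : ∀ j, ‖f (u j)‖ ≤ ε⁻¹ * ‖f (v (φ j)) - f e‖ := by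
      intro j
      have heq : f (u j) = ‖v (φ j) - e‖⁻¹ * (f (v (φ j)) - f e) := by
        rw [hu]
        simp [map_smul, map_sub, smul_eq_mul]
      rw [heq, norm_mul]
      have h2 : ‖(‖v (φ j) - e‖⁻¹ : ℝ)‖ ≤ ε⁻¹ := by
        rw [Real.norm_eq_abs, abs_of_nonneg (inv_nonneg.2 (norm_nonneg _))]
        exact inv_anti₀ hε (hne j)
      exact mul_le_mul_of_nonneg_right h2 (norm_nonneg _)
    have hg : Tendsto (fun j => ε⁻¹ * ‖f (v (φ j)) - f e‖) atTop (nhds 0) := by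
      simpa using (h1.norm.const_mul ε⁻¹)
    have := squeeze_zero_norm hb hg
    simpa using this
  have hu0 : Tendsto u atTop (nhds 0) := (hH u 0 hnorm1).mp hw
  have h1 : Tendsto (fun j => ‖u j‖) atTop (nhds (0 : ℝ)) := by simpa using hu0.norm
  have h2 : Tendsto (fun _ : ℕ => (1 : ℝ)) atTop (nhds (0 : ℝ)) :=
    Tendsto.congr hnorm1 h1
  exact zero_ne_one (tendsto_nhds_unique h2 tendsto_const_nhds)

/-- In a compact set, a sequence with a unique cluster point converges. -/
lemma tendsto_of_forall_mapClusterPt_eq {Y : Type*} [TopologicalSpace Y] {K : Set Y}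
    (hK : IsCompact K) {w : ℕ → Y} (hw : ∀ j, w j ∈ K) {z : Y}
    (huniq : ∀ ζ, MapClusterPt ζ atTop w → ζ = z) :
    Tendsto w atTop (nhds z) := by
  by_contra hcon
  obtain ⟨s, hs, hfreq⟩ := not_tendsto_iff_exists_frequently_notMem.1 hcon
  obtain ⟨U, hUs, hUopen, hzU⟩ := mem_nhds_iff.1 hs
  have hmapK : map w atTop ≤ Filter.principal K := by
    rw [le_principal_iff, mem_map]
    exact Filter.Eventually.of_forall hw
  have hne : (map w atTop ⊓ Filter.principal {y | y ∉ s}).NeBot := by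
    apply frequently_iff_neBot.1
    exact frequently_map.2 hfreq
  have hFK : (map w atTop ⊓ Filter.principal {y | y ∉ s}) ≤ Filter.principal K :=
    le_trans inf_le_left hmapK
  obtain ⟨ζ, hζK, hcl⟩ := hK.exists_clusterPt hFK
  have h1 : MapClusterPt ζ atTop w := hcl.of_inf_left
  have h2 : ζ ∈ closure {y | y ∉ s} := mem_closure_iff_clusterPt.2 hcl.of_inf_right
  have hζz : ζ = z := huniq ζ h1
  rw [hζz] at h2
  obtain ⟨y, hyU, hys⟩ := mem_closure_iff.1 h2 U hUopen hzU
  exact hys (hUs hyU)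

/-- In a strictly convex space, an element of minimal norm in a convex set of elements
of norm at least `d` is unique. -/
lemma eq_of_min_norm [StrictConvexSpace ℝ X] {S : Set X} (hconv : Convex ℝ S) {d : ℝ}
    (hd : ∀ s ∈ S, d ≤ ‖s‖) {u w : X} (hu : u ∈ S) (hw : w ∈ S)
    (hun : ‖u‖ = d) (hwn : ‖w‖ = d) : u = w := by
  have hmid : (1/2 : ℝ) • u + (1/2 : ℝ) • w ∈ S :=
    hconv hu hw (by norm_num) (by norm_num) (by norm_num)
  have h1 : d ≤ ‖(1/2 : ℝ) • u + (1/2 : ℝ) • w‖ := hd _ hmid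
  have h2 : ‖(1/2 : ℝ) • u + (1/2 : ℝ) • w‖ = ‖u + w‖ / 2 := by
    rw [← smul_add, norm_smul]
    simp [abs_of_nonneg]
    ring
  have h3 : ‖u‖ + ‖w‖ ≤ ‖u + w‖ := by
    rw [hun, hwn]
    rw [h2] at h1
    linarith
  exact eq_of_norm_eq_of_norm_add_eq (hun.trans hwn.symm)
    (le_antisymm (norm_add_le u w) h3)

/-- The key weak-compactness machine: in a reflexive strictly convex space with property (H),
a sequence in a convex set `S` on which the norm is at least `d`, whose norms converge to `d`,
converges in norm to the (unique) element of norm `d` in the closure of `S`. -/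
lemma cluster_machine [StrictConvexSpace ℝ X] (hrefl : ReflexiveSpace X) (hH : PropertyH X)
    {S : Set X} (hSconv : Convex ℝ S) {d R : ℝ} (hd0 : 0 ≤ d)
    (hSd : ∀ s ∈ S, d ≤ ‖s‖) {v : ℕ → X} (hv : ∀ j, v j ∈ S) (hvR : ∀ j, ‖v j‖ ≤ R)
    {c : ℕ → ℝ} (hvc : ∀ j, ‖v j‖ ≤ c j) (hc : Tendsto c atTop (nhds d)) :
    ∃ e ∈ closure S, ‖e‖ = d ∧ Tendsto v atTop (nhds e) := by
  classical
  have hfv : ∀ (f : X →L[ℝ] ℝ), ‖f‖ = 1 → ∀ y : X, f y ≤ ‖y‖ := by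
    intro f hf1 y
    calc f y ≤ |f y| := le_abs_self _
      _ = ‖f y‖ := (Real.norm_eq_abs _).symm
      _ ≤ ‖f‖ * ‖y‖ := f.le_opNorm y
      _ = ‖y‖ := by rw [hf1, one_mul]
  have hsurj : ∀ χ : WeakDual ℝ (StrongDual ℝ X), ∃ x : X, iotaW x = χ := by
    intro χ
    obtain ⟨x, hx⟩ := hrefl (WeakDual.toStrongDual χ)
    refine ⟨x, ?_⟩
    have : iotaW x = StrongDual.toWeakDual (WeakDual.toStrongDual χ) := by
      rw [iotaW, hx]
    rw [this]
    exact StrongDual.toWeakDual.apply_symm_apply χ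
  set K : Set (WeakDual ℝ (StrongDual ℝ X)) := iotaW '' (closedBall (0 : X) R) with hK
  have hKclosed : IsClosed K := by
    rw [← isOpen_compl_iff, isOpen_iff_forall_mem_open]
    intro χ hχ
    obtain ⟨x, rfl⟩ := hsurj χ
    have hxR : R < ‖x‖ := by
      by_contra hle
      push_neg at hle
      exact hχ ⟨x, mem_closedBall_zero_iff.2 hle, rfl⟩
    have hR0 : (0 : ℝ) ≤ R := le_trans (norm_nonneg _) (hvR 0)
    have hx0 : x ≠ 0 := by
      intro h
      rw [h, norm_zero] at hxR
      linarith
    obtain ⟨f, hf1, hfx⟩ := exists_dual_vector ℝ x (norm_ne_zero_iff.2 hx0)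
    refine ⟨{χ' : WeakDual ℝ (StrongDual ℝ X) | R < χ' f}, ?_, ?_, ?_⟩
    · rintro χ' hχ' ⟨y, hy, rfl⟩
      have : f y ≤ ‖y‖ := hfv f hf1 y
      have hyR : ‖y‖ ≤ R := mem_closedBall_zero_iff.1 hy
      have : iotaW y f ≤ R := le_trans this hyR
      exact absurd hχ' (not_lt.2 this)
    · exact isOpen_lt continuous_const (WeakDual.eval_continuous f)
    · show R < iotaW x f
      rw [iotaW_apply, hfx]
      exact hxR
  have hKsub : K ⊆ WeakDual.toStrongDual ⁻¹' closedBall 0 R := by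
    rintro _ ⟨y, hy, rfl⟩
    simp only [Set.mem_preimage, mem_closedBall_zero_iff, norm_iotaW]
    rw [mem_closedBall]
    convert (norm_iotaW y).le.trans (mem_closedBall_zero_iff.1 hy) using 1 <;>
      first | rfl | exact dist_zero_right (E := StrongDual ℝ (StrongDual ℝ X)) _
  have hKcomp : IsCompact K :=
    (WeakDual.isCompact_closedBall (0 : StrongDual ℝ (StrongDual ℝ X)) R).of_isClosed_subset
      hKclosed hKsub
  have hmemK : ∀ j, iotaW (v j) ∈ K := fun j => ⟨v j, mem_closedBall_zero_iff.2 (hvR j), rfl⟩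
  have hmaple : map (fun j => iotaW (v j)) atTop ≤ Filter.principal K := by
    rw [le_principal_iff, mem_map]
    exact Filter.Eventually.of_forall hmemK
  have hdcl : ∀ s ∈ closure S, d ≤ ‖s‖ := by
    intro s hs
    exact closure_minimal hSd (isClosed_le continuous_const continuous_norm) hs
  have hprops : ∀ z : X, MapClusterPt (iotaW z) atTop (fun j => iotaW (v j)) →
      z ∈ closure S ∧ ‖z‖ = d := by
    intro z hz
    have hzS : z ∈ closure S := by
      by_contra hzS
      obtain ⟨f, uu, hfS, hfz⟩ :=
        geometric_hahn_banach_closed_point (hSconv.closure) isClosed_closure hzS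
      have hopen : IsOpen {χ : WeakDual ℝ (StrongDual ℝ X) | uu < χ f} :=
        isOpen_lt continuous_const (WeakDual.eval_continuous f)
      have hmem : iotaW z ∈ {χ : WeakDual ℝ (StrongDual ℝ X) | uu < χ f} := by
        show uu < iotaW z f
        rw [iotaW_apply]
        exact hfz
      have hfreq := (mapClusterPt_iff_frequently.1 hz) _ (hopen.mem_nhds hmem)
      obtain ⟨j, hj⟩ := hfreq.exists
      have hj' : uu < f (v j) := hj
      exact absurd hj' (not_lt.2 (le_of_lt (hfS _ (subset_closure (hv j)))))
    have hzled : ‖z‖ ≤ d := by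
      by_contra hgt
      push_neg at hgt
      have hz0 : z ≠ 0 := by
        intro h
        rw [h, norm_zero] at hgt
        exact absurd hgt (not_lt.2 hd0)
      obtain ⟨f, hf1, hfz⟩ := exists_dual_vector ℝ z (norm_ne_zero_iff.2 hz0)
      set c' := (d + ‖z‖) / 2 with hc'
      have hdc' : d < c' := by rw [hc']; linarith
      have hc'z : c' < ‖z‖ := by rw [hc']; linarith
      have hopen : IsOpen {χ : WeakDual ℝ (StrongDual ℝ X) | c' < χ f} :=
        isOpen_lt continuous_const (WeakDual.eval_continuous f)
      have hmem : iotaW z ∈ {χ : WeakDual ℝ (StrongDual ℝ X) | c' < χ f} := by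
        show c' < iotaW z f
        rw [iotaW_apply, hfz]
        exact hc'z
      have hfreq := (mapClusterPt_iff_frequently.1 hz) _ (hopen.mem_nhds hmem)
      have hev : ∀ᶠ j in atTop, c j < c' := hc.eventually (gt_mem_nhds hdc')
      obtain ⟨j, hj1, hj2⟩ := (hfreq.and_eventually hev).exists
      have hj1' : c' < f (v j) := hj1
      have : f (v j) ≤ ‖v j‖ := hfv f hf1 (v j)
      have := hvc j
      linarith
    have hzged : d ≤ ‖z‖ := hdcl z hzS
    exact ⟨hzS, le_antisymm hzled hzged⟩
  obtain ⟨ζ, hζK, hζcl⟩ := hKcomp.exists_clusterPt hmaple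
  obtain ⟨e, heR, rfl⟩ := hζK
  have heP := hprops e hζcl
  have huniq : ∀ χ, MapClusterPt χ atTop (fun j => iotaW (v j)) → χ = iotaW e := by
    intro χ hχ
    have hχK : χ ∈ K := by
      have : χ ∈ closure K := mem_closure_iff_clusterPt.2 (hχ.clusterPt.mono hmaple)
      rwa [hKclosed.closure_eq] at this
    obtain ⟨z, hzR, rfl⟩ := hχK
    have hzP := hprops z hχ
    rw [eq_of_min_norm (hSconv.closure) hdcl hzP.1 heP.1 hzP.2 heP.2]
  have htend : Tendsto (fun j => iotaW (v j)) atTop (nhds (iotaW e)) :=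
    tendsto_of_forall_mapClusterPt_eq hKcomp hmemK huniq
  have hwt : WeakTendsto v e := by
    intro f
    have := tendsto_iff_forall_eval_tendsto_topDualPairing.1 htend f
    exact this
  exact ⟨e, heP.1, heP.2, tendsto_of_weakTendsto hH hwt⟩

end Aux

theorem iterates_converge_to_best_proximity {X : Type*} [NormedAddCommGroup X]
    [NormedSpace ℝ X] [CompleteSpace X] [StrictConvexSpace ℝ X]
    (hrefl : ReflexiveSpace X) (hH : PropertyH X)
    (A B : Set X) (hA : A.Nonempty) (hB : B.Nonempty)
    (hAclosed : IsClosed A) (hBclosed : IsClosed B)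
    (hAconv : Convex ℝ A) (hBconv : Convex ℝ B)
    (T : X → X) (hT : CyclicContraction A B T) :
    ∃ b₀ ∈ B, dist b₀ (T b₀) = setDist A B ∧
      (∀ b ∈ B, dist b (T b) = setDist A B → b = b₀) ∧
      ∀ b ∈ B, Tendsto (fun n => T^[2 * n] b) atTop (nhds b₀) := by
  classical
  obtain ⟨hTA, hTB, k, hk0, hk1, hcontr⟩ := hT
  set dAB := setDist A B with hdAB
  have hbdd : BddBelow (Set.image2 dist A B) := by
    refine ⟨0, ?_⟩
    rintro r ⟨a, ha, b, hb, rfl⟩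
    exact dist_nonneg
  have hdle : ∀ a ∈ A, ∀ b ∈ B, dAB ≤ dist a b := fun a ha b hb =>
    csInf_le hbdd (Set.mem_image2_of_mem ha hb)
  have hd0 : 0 ≤ dAB := by
    obtain ⟨a, ha⟩ := hA
    obtain ⟨b, hb⟩ := hB
    refine le_csInf ⟨dist a b, Set.mem_image2_of_mem ha hb⟩ ?_
    rintro r ⟨a', _, b', _, rfl⟩
    exact dist_nonneg
  have hk0' : (0 : ℝ) ≤ k := le_of_lt hk0
  have hkn : ∀ n : ℕ, 0 ≤ k ^ n ∧ k ^ n ≤ 1 := fun n =>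
    ⟨pow_nonneg hk0' n, pow_le_one₀ hk0' (le_of_lt hk1)⟩
  -- symmetric subtracted contraction
  have hcontr2 : ∀ x y, ((x ∈ A ∧ y ∈ B) ∨ (x ∈ B ∧ y ∈ A)) →
      dist (T x) (T y) - dAB ≤ k * (dist x y - dAB) := by
    rintro x y (⟨hx, hy⟩ | ⟨hx, hy⟩)
    · have := hcontr x hx y hy
      linarith
    · have := hcontr y hy x hx
      rw [dist_comm x y, dist_comm (T x) (T y)]
      linarith
  -- alternation of sides
  have halt : ∀ x y, ((x ∈ A ∧ y ∈ B) ∨ (x ∈ B ∧ y ∈ A)) → ∀ n : ℕ,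
      ((T^[n] x ∈ A ∧ T^[n] y ∈ B) ∨ (T^[n] x ∈ B ∧ T^[n] y ∈ A)) := by
    intro x y h n
    induction n with
    | zero => simpa using h
    | succ n ih =>
      simp only [Function.iterate_succ_apply']
      rcases ih with ⟨h1, h2⟩ | ⟨h1, h2⟩
      · exact Or.inr ⟨hTA h1, hTB h2⟩
      · exact Or.inl ⟨hTB h1, hTA h2⟩
  have hdlealt : ∀ x y, ((x ∈ A ∧ y ∈ B) ∨ (x ∈ B ∧ y ∈ A)) → dAB ≤ dist x y := by
    rintro x y (⟨hx, hy⟩ | ⟨hx, hy⟩)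
    · exact hdle x hx y hy
    · rw [dist_comm]
      exact hdle y hy x hx
  -- geometric decay for mixed pairs
  have hdecay : ∀ x y, ((x ∈ A ∧ y ∈ B) ∨ (x ∈ B ∧ y ∈ A)) → ∀ n : ℕ,
      dist (T^[n] x) (T^[n] y) - dAB ≤ k ^ n * (dist x y - dAB) := by
    intro x y h n
    induction n with
    | zero => simp
    | succ n ih =>
      simp only [Function.iterate_succ_apply']
      calc dist (T (T^[n] x)) (T (T^[n] y)) - dAB
          ≤ k * (dist (T^[n] x) (T^[n] y) - dAB) := hcontr2 _ _ (halt x y h n)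
        _ ≤ k * (k ^ n * (dist x y - dAB)) := mul_le_mul_of_nonneg_left ih hk0'
        _ = k ^ (n + 1) * (dist x y - dAB) := by ring
  -- iterates of points of B
  have hmem : ∀ b ∈ B, ∀ n : ℕ, T^[2*n] b ∈ B ∧ T^[2*n+1] b ∈ A := by
    intro b hb n
    induction n with
    | zero => exact ⟨by simpa using hb, by simpa using hTB hb⟩
    | succ n ih =>
      have e1 : 2*(n+1) = (2*n+1)+1 := by ring
      rw [e1]
      simp only [Function.iterate_succ_apply']
      have h1 : T (T^[2*n] b) ∈ A := by
        have := ih.2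
        rwa [Function.iterate_succ_apply'] at this
      exact ⟨hTA h1, hTB (hTA h1)⟩
  -- consecutive distances
  have hcons : ∀ b ∈ B, ∀ n : ℕ,
      dist (T^[n+1] b) (T^[n] b) - dAB ≤ k ^ n * (dist (T b) b - dAB) := by
    intro b hb n
    have := hdecay (T b) b (Or.inl ⟨hTB hb, hb⟩) n
    rwa [← Function.iterate_succ_apply] at this
  have hs0nn : ∀ b ∈ B, 0 ≤ dist (T b) b - dAB := fun b hb =>
    sub_nonneg.2 (hdlealt _ _ (Or.inl ⟨hTB hb, hb⟩))
  -- boundedness of orbits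
  have hbound : ∀ b ∈ B, ∃ M : ℝ, 0 ≤ M ∧ ∀ n : ℕ, dist b (T^[2*n+1] b) - dAB ≤ M := by
    intro b hb
    set s0 := dist (T b) b - dAB with hs0def
    have hs0' : 0 ≤ s0 := hs0nn b hb
    have hrho : ∀ n : ℕ, dist (T^[n+1] b) (T^[n] b) ≤ dAB + s0 := by
      intro n
      have h1 := hcons b hb n
      nlinarith [(hkn n).1, (hkn n).2, hs0']
    set C := (1-k) * dAB + 2*(dAB + s0) with hC
    set Mx := max (dist b (T b)) (C / (1-k)) with hMx
    have ha : ∀ n : ℕ, dist (T^[2*n] b) (T b) ≤ Mx := by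
      intro n
      induction n with
      | zero =>
        have : dist b (T b) ≤ Mx := by
          rw [hMx]
          exact le_max_left _ _
        simpa using this
      | succ n ih =>
        have e1 : 2*(n+1) = (2*n+1)+1 := by ring
        rw [e1]
        have t1 : dist (T^[(2*n+1)+1] b) (T^[2*n+1] b) ≤ dAB + s0 := hrho (2*n+1)
        have t2 : dist (T^[2*n+1] b) (T^[2] b) ≤ k * dist (T^[2*n] b) (T b) + (1-k) * dAB := by
          have h21 : T^[2*n+1] b = T (T^[2*n] b) := Function.iterate_succ_apply' T (2*n) b
          have h22 : T^[2] b = T (T b) := by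
            rw [show (2:ℕ) = 0+1+1 from rfl]
            simp [Function.iterate_succ_apply']
          rw [h21, h22]
          have hc2 := hcontr (T b) (hTB hb) (T^[2*n] b) (hmem b hb n).1
          rw [dist_comm (T (T b)) (T (T^[2*n] b)), dist_comm (T b) (T^[2*n] b)] at hc2
          exact hc2
        have t3 : dist (T^[2] b) (T b) ≤ dAB + s0 := by
          have := hrho 1
          simpa using this
        have tri : dist (T^[(2*n+1)+1] b) (T b) ≤
            dist (T^[(2*n+1)+1] b) (T^[2*n+1] b) + dist (T^[2*n+1] b) (T^[2] b)
              + dist (T^[2] b) (T b) := dist_triangle4 _ _ _ _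
        have hk' : k * dist (T^[2*n] b) (T b) ≤ k * Mx := mul_le_mul_of_nonneg_left ih hk0'
        have hCm : C / (1-k) ≤ Mx := by
          rw [hMx]
          exact le_max_right _ _
        have h1k : (0:ℝ) < 1 - k := by linarith
        have hC' : C ≤ (1-k) * Mx := by
          have := (div_le_iff₀ h1k).1 hCm
          linarith
        linarith
    refine ⟨dist b (T b) + Mx + (dAB + s0), ?_, ?_⟩
    · have hMx0 : 0 ≤ Mx := le_trans dist_nonneg (by rw [hMx]; exact le_max_left _ _)
      have : 0 ≤ dAB + s0 := by linarith
      have := dist_nonneg (x := b) (y := T b)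
      linarith
    · intro n
      have tri : dist b (T^[2*n+1] b) ≤
          dist b (T b) + dist (T b) (T^[2*n] b) + dist (T^[2*n] b) (T^[2*n+1] b) :=
        dist_triangle4 _ _ _ _
      have h1 : dist (T b) (T^[2*n] b) ≤ Mx := by
        rw [dist_comm]
        exact ha n
      have h2 : dist (T^[2*n] b) (T^[2*n+1] b) ≤ dAB + s0 := by
        rw [dist_comm]
        exact hrho (2*n)
      linarith
  -- the difference set `B - A`
  set S0 : Set X := B - A with hS0
  have hS0conv : Convex ℝ S0 := by
    rw [hS0]
    exact hBconv.sub hAconv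
  have hS0mem : ∀ {b' a' : X}, b' ∈ B → a' ∈ A → b' - a' ∈ S0 := by
    intro b' a' hb' ha'
    rw [hS0]
    exact Set.sub_mem_sub hb' ha'
  have hS0d : ∀ s ∈ S0, dAB ≤ ‖s‖ := by
    intro s hs
    rw [hS0, Set.mem_sub] at hs
    obtain ⟨b', hb', a', ha', rfl⟩ := hs
    rw [← dist_eq_norm]
    exact hdlealt b' a' (Or.inr ⟨hb', ha'⟩)
  have hdc : ∀ s ∈ closure S0, dAB ≤ ‖s‖ := fun s hs =>
    closure_minimal hS0d (isClosed_le continuous_const continuous_norm) hs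
  -- cross estimates
  have hcross : ∀ b ∈ B, ∀ m n : ℕ, m ≤ n →
      dist (T^[2*m] b) (T^[2*n+1] b) - dAB ≤
        k ^ (2*m) * (dist b (T^[2*(n-m)+1] b) - dAB) := by
    intro b hb m n hmn
    have hsplit : 2*n+1 = 2*m + (2*(n-m)+1) := by omega
    have he : T^[2*n+1] b = T^[2*m] (T^[2*(n-m)+1] b) := by
      rw [hsplit, Function.iterate_add_apply]
    rw [he]
    exact hdecay b (T^[2*(n-m)+1] b) (Or.inr ⟨hb, (hmem b hb (n-m)).2⟩) (2*m)
  -- convergence of iterates for each b ∈ B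
  have hLIM : ∀ b ∈ B, ∃ l ∈ B, dist l (T l) = dAB ∧
      Tendsto (fun n => T^[2*n] b) atTop (nhds l) := by
    intro b hb
    obtain ⟨M, hM0, hMb⟩ := hbound b hb
    have hsq : Tendsto (fun j : ℕ => dAB + k ^ (2*j) * M) atTop (nhds dAB) := by
      have h0 : Tendsto (fun j : ℕ => (k^2)^j) atTop (nhds 0) :=
        tendsto_pow_atTop_nhds_zero_of_lt_one (sq_nonneg k) (by nlinarith)
      have h1 : Tendsto (fun j : ℕ => dAB + (k^2)^j * M) atTop (nhds (dAB + 0 * M)) :=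
        tendsto_const_nhds.add (h0.mul_const M)
      simp only [zero_mul, add_zero] at h1
      exact Tendsto.congr (fun j => by rw [← pow_mul]) h1
    -- the diagonal difference sequence
    set w : ℕ → X := fun j => T^[2*j] b - T^[2*j+1] b with hw
    have hwS : ∀ j, w j ∈ S0 := fun j => hS0mem (hmem b hb j).1 (hmem b hb j).2
    have hwdist : ∀ j, ‖w j‖ = dist (T^[2*j] b) (T^[2*j+1] b) := by
      intro j
      simp only [hw]
      exact (dist_eq_norm _ _).symm
    have hwc : ∀ j, ‖w j‖ ≤ dAB + k ^ (2*j) * M := by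
      intro j
      have h1 := hcross b hb j j le_rfl
      rw [Nat.sub_self] at h1
      have h2 := hMb 0
      have h3 : (0:ℝ) ≤ k ^ (2*j) := (hkn (2*j)).1
      have hq : 0 ≤ dist b (T^[2*0+1] b) - dAB :=
        sub_nonneg.2 (hdlealt b _ (Or.inr ⟨hb, (hmem b hb 0).2⟩))
      rw [hwdist j]
      nlinarith
    have hwR : ∀ j, ‖w j‖ ≤ dAB + M := by
      intro j
      have := hwc j
      nlinarith [(hkn (2*j)).1, (hkn (2*j)).2, hM0]
    obtain ⟨e, heS, hed, hdiagw⟩ :=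
      cluster_machine hrefl hH hS0conv hd0 hS0d hwS hwR hwc hsq
    -- the key uniform claim
    have hkey : ∀ ε : ℝ, 0 < ε → ∃ N : ℕ, ∀ m n : ℕ, N ≤ m → m ≤ n →
        ‖(T^[2*m] b - T^[2*n+1] b) - e‖ ≤ ε := by
      intro ε hε
      by_contra hcon
      push_neg at hcon
      choose mf nf h1 h2 h3 using hcon
      set v : ℕ → X := fun j => T^[2*(mf j)] b - T^[2*(nf j)+1] b with hv
      have hvS : ∀ j, v j ∈ S0 := fun j => hS0mem (hmem b hb (mf j)).1 (hmem b hb (nf j)).2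
      have hvdist : ∀ j, ‖v j‖ = dist (T^[2*(mf j)] b) (T^[2*(nf j)+1] b) := by
        intro j
        simp only [hv]
        exact (dist_eq_norm _ _).symm
      have hvc : ∀ j, ‖v j‖ ≤ dAB + k ^ (2*j) * M := by
        intro j
        have hcr := hcross b hb (mf j) (nf j) (h2 j)
        have hup := hMb (nf j - mf j)
        have h3' : (0:ℝ) ≤ k ^ (2*(mf j)) := (hkn (2*(mf j))).1
        have hkle : k ^ (2*(mf j)) ≤ k ^ (2*j) :=
          pow_le_pow_of_le_one hk0' (le_of_lt hk1) (by have := h1 j; omega)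
        have hq : 0 ≤ dist b (T^[2*(nf j - mf j)+1] b) - dAB :=
          sub_nonneg.2 (hdlealt b _ (Or.inr ⟨hb, (hmem b hb _).2⟩))
        rw [hvdist j]
        nlinarith
      have hvR : ∀ j, ‖v j‖ ≤ dAB + M := by
        intro j
        have := hvc j
        nlinarith [(hkn (2*j)).1, (hkn (2*j)).2, hM0]
      obtain ⟨e', he'S, he'd, he'T⟩ :=
        cluster_machine hrefl hH hS0conv hd0 hS0d hvS hvR hvc hsq
      have hee : e' = e := eq_of_min_norm (hS0conv.closure) hdc he'S heS he'd hed
      rw [hee] at he'T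
      obtain ⟨N, hN⟩ := Metric.tendsto_atTop.1 he'T ε hε
      have h5 := hN N le_rfl
      rw [dist_eq_norm] at h5
      have h6 := h3 N
      have : v N = T^[2*(mf N)] b - T^[2*(nf N)+1] b := rfl
      rw [this] at h5
      linarith
    -- Cauchy
    have hcauchy : CauchySeq (fun n => T^[2*n] b) := by
      rw [Metric.cauchySeq_iff]
      intro ε hε
      obtain ⟨N, hN⟩ := hkey (ε/3) (by linarith)
      refine ⟨N, fun m hm n hn => ?_⟩
      have key : ∀ p q, N ≤ p → p ≤ q → dist (T^[2*p] b) (T^[2*q] b) < ε := by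
        intro p q hp hpq
        have h1 := hN p q hp hpq
        have h2 := hN q q (le_trans hp hpq) le_rfl
        have h4 : dist (T^[2*p] b) (T^[2*q] b) ≤
            ‖(T^[2*p] b - T^[2*q+1] b) - e‖ + ‖(T^[2*q] b - T^[2*q+1] b) - e‖ := by
          rw [dist_eq_norm]
          have heq : T^[2*p] b - T^[2*q] b =
              ((T^[2*p] b - T^[2*q+1] b) - e) - ((T^[2*q] b - T^[2*q+1] b) - e) := by
            abel
          rw [heq]
          exact norm_sub_le _ _
        linarith
      rcases le_total m n with h | h
      · exact key m n hm h
      · rw [dist_comm]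
        exact key n m hn h
    obtain ⟨l, hl⟩ := cauchySeq_tendsto_of_complete hcauchy
    have hlB : l ∈ B :=
      hBclosed.mem_of_tendsto hl (Filter.Eventually.of_forall fun n => (hmem b hb n).1)
    have hodd : Tendsto (fun n => T^[2*n+1] b) atTop (nhds (l - e)) := by
      have h := hl.sub hdiagw
      simp only [hw, sub_sub_cancel] at h
      exact h
    have hgoal1 : dist l (T l) = dAB := by
      have hstep : ∀ n : ℕ, dist (T^[2*(n+1)] b) (T l) ≤ k * dist (T^[2*n+1] b) l + (1-k) * dAB := by
        intro n
        have e1 : 2*(n+1) = (2*n+1)+1 := by ring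
        rw [e1, Function.iterate_succ_apply']
        exact hcontr _ (hmem b hb n).2 l hlB
      have hL : Tendsto (fun n => dist (T^[2*(n+1)] b) (T l)) atTop (nhds (dist l (T l))) := by
        have hshift : Tendsto (fun n => T^[2*(n+1)] b) atTop (nhds l) :=
          hl.comp (tendsto_add_atTop_nat 1)
        exact hshift.dist tendsto_const_nhds
      have hR : Tendsto (fun n => k * dist (T^[2*n+1] b) l + (1-k) * dAB) atTop
          (nhds (k * dAB + (1-k) * dAB)) := by
        have h1 : Tendsto (fun n => dist (T^[2*n+1] b) l) atTop (nhds (dist (l - e) l)) :=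
          hodd.dist tendsto_const_nhds
        have h2 : dist (l - e) l = dAB := by
          rw [dist_eq_norm]
          have : l - e - l = -e := by abel
          rw [this, norm_neg]
          exact hed
        rw [h2] at h1
        exact (h1.const_mul k).add tendsto_const_nhds
      have hle := le_of_tendsto_of_tendsto' hL hR hstep
      have hge : dAB ≤ dist l (T l) := hdlealt l (T l) (Or.inr ⟨hlB, hTB hlB⟩)
      have hkk : k * dAB + (1-k) * dAB = dAB := by ring
      rw [hkk] at hle
      linarith
    exact ⟨l, hlB, hgoal1, hl⟩
  -- best proximity points are fixed by T²
  have hfix : ∀ p ∈ B, dist p (T p) = dAB → T (T p) = p := by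
    intro p hp hpd
    have hTpp : dist (T p) p = dAB := by
      rw [dist_comm]
      exact hpd
    have h1 : dist (T (T p)) (T p) ≤ dAB := by
      have := hcontr (T p) (hTB hp) p hp
      rw [hTpp] at this
      linarith
    have h2 : dAB ≤ dist (T (T p)) (T p) := by
      rw [dist_comm]
      exact hdlealt (T p) (T (T p)) (Or.inl ⟨hTB hp, hTA (hTB hp)⟩)
    have h3 : dist (T (T p)) (T p) = dAB := le_antisymm h1 h2
    have hu : p - T p ∈ closure S0 := subset_closure (hS0mem hp (hTB hp))
    have hv2 : T (T p) - T p ∈ closure S0 :=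
      subset_closure (hS0mem (hTA (hTB hp)) (hTB hp))
    have h4 : ‖p - T p‖ = dAB := by
      rw [← dist_eq_norm]
      exact hpd
    have h5 : ‖T (T p) - T p‖ = dAB := by
      rw [← dist_eq_norm]
      exact h3
    have h6 := eq_of_min_norm (hS0conv.closure) hdc hu hv2 h4 h5
    have := sub_left_inj.1 h6
    exact this.symm
  -- uniqueness of best proximity points
  have huniq : ∀ p ∈ B, ∀ q ∈ B, dist p (T p) = dAB → dist q (T q) = dAB → p = q := by
    intro p hp q hq hpd hqd
    have hst : dist q (T p) ≤ k * dist p (T q) + (1-k) * dAB := by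
      have h1 : dist (T (T q)) (T p) ≤ k * dist (T q) p + (1-k) * dAB := hcontr (T q) (hTB hq) p hp
      rw [hfix q hq hqd] at h1
      rw [dist_comm (T q) p] at h1
      exact h1
    have hts : dist p (T q) ≤ k * dist q (T p) + (1-k) * dAB := by
      have h1 : dist (T (T p)) (T q) ≤ k * dist (T p) q + (1-k) * dAB := hcontr (T p) (hTB hp) q hq
      rw [hfix p hp hpd] at h1
      rw [dist_comm (T p) q] at h1
      exact h1
    have hsge : dAB ≤ dist p (T q) := hdlealt p (T q) (Or.inr ⟨hp, hTB hq⟩)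
    have htge : dAB ≤ dist q (T p) := hdlealt q (T p) (Or.inr ⟨hq, hTB hp⟩)
    have hsd : dist p (T q) = dAB := by nlinarith
    have h4 : ‖p - T q‖ = dAB := by
      rw [← dist_eq_norm]
      exact hsd
    have h5 : ‖q - T q‖ = dAB := by
      rw [← dist_eq_norm]
      exact hqd
    have h6 := eq_of_min_norm (hS0conv.closure) hdc
      (subset_closure (hS0mem hp (hTB hq)))
      (subset_closure (hS0mem hq (hTB hq))) h4 h5
    exact sub_left_inj.1 h6
  -- assemble
  obtain ⟨bb, hbb⟩ := hB
  obtain ⟨b₀, hb₀B, hb₀d, hb₀T⟩ := hLIM bb hbb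
  refine ⟨b₀, hb₀B, hb₀d, fun b hbB hbd => huniq b hbB b₀ hb₀B hbd hb₀d, fun b hbB => ?_⟩
  obtain ⟨l, hlB, hld, hlT⟩ := hLIM b hbB
  rwa [huniq l hlB b₀ hb₀B hld hb₀d] at hlT
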